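/- arXiv:1412.1641 — 2 statements merged into one kernel-verified Lean document; each statement's English description precedes it below -/
import Mathlib

section
/- Let Σ be an alphabet of cardinality n ≥ 1 and let k ≥ 1. If w is a word over Σ such that sub_k(w) = Σ^{≤k} (every word of length at most k is a subword of w) and any two distinct prefixes w1, w2 of w satisfy sub_k(w1) ≠ sub_k(w2), then |w| ≤ C(k+n, k) − 1, where C denotes the binomial coefficient. -/
/-- `subk k w` is the set of scattered subwords of `w` of length at most `k`. -/
def subk {α : Type*} (k : ℕ) (w : List α) : Set (List α) :=
  {u | u.length ≤ k ∧ u.Sublist w}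

/-- Two words are `k`-equivalent if they have the same subwords of length at most `k`. -/
def kEquiv {α : Type*} (k : ℕ) (u v : List α) : Prop :=
  subk k u = subk k v

/-- A language is `k`-piecewise testable (Simon's characterization):
`k`-equivalent words are equi-members. -/
def IsPT {α : Type*} (k : ℕ) (L : Language α) : Prop :=
  ∀ u v : List α, kEquiv k u v → (u ∈ L ↔ v ∈ L)

/-- A DFA is minimal if all states are reachable and pairwise distinguishable. -/
def IsMinimalDFA {α σ : Type*} (A : DFA α σ) : Prop :=
  (∀ q : σ, ∃ w : List α, A.eval w = q) ∧
  ∀ p q : σ,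
    (∀ w : List α, (A.evalFrom p w ∈ A.accept ↔ A.evalFrom q w ∈ A.accept)) → p = q

/-- There is a simple path (pairwise distinct states) with `m` transitions in the DFA `A`. -/
def DFAHasSimplePath {α σ : Type*} (A : DFA α σ) (m : ℕ) : Prop :=
  ∃ (qs : Fin (m + 1) → σ) (as : Fin m → α),
    Function.Injective qs ∧ ∀ i : Fin m, A.step (qs i.castSucc) (as i) = qs i.succ

/-- The depth of a DFA: the number of transitions on a longest simple path. -/
noncomputable def dfaDepth {α σ : Type*} (A : DFA α σ) : ℕ :=
  sSup {m | DFAHasSimplePath A m}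

/-- There is a simple path (pairwise distinct states) with `m` transitions in the NFA `A`. -/
def NFAHasSimplePath {α σ : Type*} (A : NFA α σ) (m : ℕ) : Prop :=
  ∃ (qs : Fin (m + 1) → σ) (as : Fin m → α),
    Function.Injective qs ∧ ∀ i : Fin m, qs i.succ ∈ A.step (qs i.castSucc) (as i)

/-- The depth of an NFA: the number of transitions on a longest simple path. -/
noncomputable def nfaDepth {α σ : Type*} (A : NFA α σ) : ℕ :=
  sSup {m | NFAHasSimplePath A m}

namespace Stmt16Aux

open List

/-- Decompose a sublist of `l ++ [b]`. -/
lemma sublist_concat_cases {α : Type*} {x l : List α} {b : α}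
    (h : x <+ l ++ [b]) : x <+ l ∨ ∃ v, x = v ++ [b] ∧ v <+ l := by
  rw [List.sublist_append_iff] at h
  obtain ⟨x1, x2, rfl, h1, h2⟩ := h
  rcases List.sublist_singleton.1 h2 with rfl | rfl
  · left; simpa using h1
  · right; exact ⟨x1, rfl, h1⟩

/-- Key lifting lemma: if appending `b` to `r1` adds no new subword of length `≤ k`,
and `A` contains `b` and all letters of `r1`, then appending `b` to `A ++ r1`
adds no new subword of length `≤ k + 1`. -/
lemma key_lift {α : Type*} (k : ℕ) (A r1 : List α) (b : α)
    (hb : b ∈ A) (hr : ∀ c ∈ r1, c ∈ A)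
    (h : subk k r1 = subk k (r1 ++ [b])) :
    subk (k + 1) (A ++ r1) = subk (k + 1) ((A ++ r1) ++ [b]) := by
  apply Set.Subset.antisymm
  · exact fun x hx => ⟨hx.1, hx.2.trans (List.sublist_append_left _ _)⟩
  · rintro x ⟨hlen, hsub⟩
    rcases sublist_concat_cases hsub with hx | ⟨v, rfl, hv⟩
    · exact ⟨hlen, hx⟩
    · -- x = v ++ [b], v <+ A ++ r1
      rw [List.sublist_append_iff] at hv
      obtain ⟨v1, v2, rfl, hv1, hv2⟩ := hv
      rcases v1 with _ | ⟨c, v1'⟩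
      · -- v1 = [], so v = v2 <+ r1
        simp only [List.nil_append] at hlen ⊢
        rcases v2 with _ | ⟨c, v'⟩
        · -- v = []
          exact ⟨by simpa using hlen,
            ((List.singleton_sublist.2 hb).trans (List.sublist_append_left _ _))⟩
        · -- v = c :: v'
          have hc : c ∈ A := hr c (hv2.subset List.mem_cons_self)
          have hv' : v' <+ r1 := (List.sublist_cons_self c v').trans hv2
          have hlen' : (v' ++ [b]).length ≤ k := by
            simp at hlen ⊢; omega
          have hmem : v' ++ [b] ∈ subk k (r1 ++ [b]) :=
            ⟨hlen', hv'.append (List.Sublist.refl [b])⟩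
          rw [← h] at hmem
          refine ⟨hlen, ?_⟩
          have : (c :: v') ++ [b] = [c] ++ (v' ++ [b]) := by simp
          rw [this]
          exact (List.singleton_sublist.2 hc).append hmem.2
      · -- v1 = c :: v1' nonempty
        have hlen2 : (v2 ++ [b]).length ≤ k := by
          simp at hlen ⊢; omega
        have hmem : v2 ++ [b] ∈ subk k (r1 ++ [b]) :=
          ⟨hlen2, hv2.append (List.Sublist.refl [b])⟩
        rw [← h] at hmem
        refine ⟨hlen, ?_⟩
        have : (c :: v1' ++ v2) ++ [b] = (c :: v1') ++ (v2 ++ [b]) := by simp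
        rw [this]
        exact hv1.append hmem.2

lemma subk_zero {α : Type*} (v : List α) : subk 0 v = {[]} := by
  ext u
  constructor
  · rintro ⟨h1, _⟩
    simpa using List.length_eq_zero_iff.1 (Nat.le_zero.1 h1)
  · rintro rfl
    exact ⟨le_rfl, List.nil_sublist v⟩

lemma strict_zero_nil {α : Type*} {w : List α}
    (h : ∀ (p : List α) (b : α), p ++ [b] <+: w → subk 0 p ≠ subk 0 (p ++ [b])) :
    w = [] := by
  cases w with
  | nil => rfl
  | cons x xs =>
    exact absurd ((subk_zero _).trans (subk_zero _).symm)
      (h [] x ⟨xs, by simp⟩)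

/-- Main lemma: a `k`-strict word over letters from `S` has length at most
`C(|S| + k, k) - 1`. -/
lemma main {α : Type*} : ∀ (N k : ℕ) (S : Finset α) (w : List α),
    k + S.card ≤ N → (∀ a ∈ w, a ∈ S) →
    (∀ (p : List α) (b : α), p ++ [b] <+: w → subk k p ≠ subk k (p ++ [b])) →
    w.length ≤ (S.card + k).choose k - 1 := by
  intro N
  induction N with
  | zero =>
    intro k S w hN hsub hstrict
    have hk0 : k = 0 := by omega
    subst hk0
    rw [strict_zero_nil hstrict]
    exact Nat.zero_le _
  | succ N ih =>
    intro k S w hN hsub hstrict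
    classical
    rcases k with _ | k'
    · rw [strict_zero_nil hstrict]
      exact Nat.zero_le _
    by_cases hex : ∃ s ∈ S, s ∉ w
    · obtain ⟨s, hsS, hsw⟩ := hex
      have hcard : 1 ≤ S.card := Finset.card_pos.2 ⟨s, hsS⟩
      have hce : (S.erase s).card = S.card - 1 := Finset.card_erase_of_mem hsS
      have h1 := ih (k' + 1) (S.erase s) w (by omega)
        (fun a ha => Finset.mem_erase.2 ⟨fun h => hsw (h ▸ ha), hsub a ha⟩) hstrict
      refine h1.trans (Nat.sub_le_sub_right ?_ 1)
      exact Nat.choose_le_choose _ (by omega)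
    · push_neg at hex
      rcases S.eq_empty_or_nonempty with rfl | ⟨s0, hs0⟩
      · have : w = [] := List.eq_nil_iff_forall_not_mem.2 (fun a ha => by
          simpa using hsub a ha)
        rw [this]; exact Nat.zero_le _
      have hcard : 1 ≤ S.card := Finset.card_pos.2 ⟨s0, hs0⟩
      have hfind : ∃ i, ∀ s ∈ S, s ∈ w.take i :=
        ⟨w.length, fun s hs => by simpa using hex s hs⟩
      set i := Nat.find hfind with hi
      have hPi : ∀ s ∈ S, s ∈ w.take i := Nat.find_spec hfind
      have hile : i ≤ w.length := Nat.find_min' hfind (fun s hs => by simpa using hex s hs)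
      have hipos : 0 < i := by
        rcases Nat.eq_zero_or_pos i with h0 | h
        · exact absurd (hPi s0 hs0) (by simp [h0])
        · exact h
      obtain ⟨j, hj⟩ : ∃ j, i = j + 1 := ⟨i - 1, by omega⟩
      have hPj : ¬ ∀ s ∈ S, s ∈ w.take j := Nat.find_min hfind (by omega)
      push_neg at hPj
      obtain ⟨s, hsS, hsB⟩ := hPj
      set B := w.take j with hB
      set A := w.take i with hA
      set r := w.drop i with hr
      -- bound on B
      have hBsub : ∀ a ∈ B, a ∈ S.erase s :=
        fun a ha => Finset.mem_erase.2
          ⟨fun h => hsB (h ▸ ha), hsub a ((List.take_sublist j w).subset ha)⟩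
      have hBstrict : ∀ (p : List α) (b : α), p ++ [b] <+: B →
          subk (k' + 1) p ≠ subk (k' + 1) (p ++ [b]) :=
        fun p b h => hstrict p b (h.trans (List.take_prefix j w))
      have hce : (S.erase s).card = S.card - 1 := Finset.card_erase_of_mem hsS
      have hBlen := ih (k' + 1) (S.erase s) B (by omega) hBsub hBstrict
      rw [hce] at hBlen
      -- bound on r
      have hAr : A ++ r = w := List.take_append_drop i w
      have hrsub : ∀ a ∈ r, a ∈ S := fun a ha => hsub a ((List.drop_sublist i w).subset ha)
      have hrstrict : ∀ (p : List α) (b : α), p ++ [b] <+: r →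
          subk k' p ≠ subk k' (p ++ [b]) := by
        intro p b hpre hEq
        obtain ⟨t, ht⟩ := hpre
        have hpreW : (A ++ p) ++ [b] <+: w :=
          ⟨t, by rw [← hAr, ← ht]; simp⟩
        apply hstrict (A ++ p) b hpreW
        have hbA : b ∈ A := hPi b (hsub b (by
          rw [← hAr]
          exact List.mem_append_right _ (by rw [← ht]; exact List.mem_append_left _ (List.mem_append_right _ (List.mem_singleton_self b)))))
        have hpA : ∀ c ∈ p, c ∈ A := fun c hc => hPi c (hsub c (by
          rw [← hAr]
          exact List.mem_append_right _ (by rw [← ht]; exact List.mem_append_left _ (List.mem_append_left _ hc))))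
        have := key_lift k' A p b hbA hpA hEq
        rw [List.append_assoc] at this ⊢
        exact this
      have hrlen := ih k' S r (by omega) hrsub hrstrict
      -- combine
      have hwlen : w.length = i + r.length := by
        conv_lhs => rw [← hAr]
        rw [List.length_append, hA, List.length_take]
        omega
      have hBlen' : B.length = j := by
        rw [hB, List.length_take]; omega
      have hX : 0 < (S.card - 1 + (k' + 1)).choose (k' + 1) :=
        Nat.choose_pos (by omega)
      have hY : 0 < (S.card + k').choose k' := Nat.choose_pos (by omega)
      have hpascal : (S.card + (k' + 1)).choose (k' + 1)
          = (S.card + k').choose k' + (S.card + k').choose (k' + 1) := by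
        have h1 : S.card + (k' + 1) = (S.card + k') + 1 := by omega
        rw [h1, Nat.choose_succ_succ]
      have hXeq : S.card - 1 + (k' + 1) = S.card + k' := by omega
      rw [hXeq] at hBlen hX
      omega

end Stmt16Aux


/-- Upper bound of Problem 1: a word over an `n`-letter alphabet containing all
subwords of length at most `k` and whose distinct prefixes are pairwise
non-`k`-equivalent has length at most `C(k+n, k) - 1`. -/
theorem stmt16 {α : Type*} [Fintype α] (k n : ℕ) (hk : 1 ≤ k) (hn : 1 ≤ n)
    (hcard : Fintype.card α = n) (w : List α)
    (hfull : subk k w = {u : List α | u.length ≤ k})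
    (hpref : ∀ w1 w2 : List α, w1 <+: w → w2 <+: w → subk k w1 = subk k w2 → w1 = w2) :
    w.length ≤ Nat.choose (k + n) k - 1 := by
  have hs : ∀ (p : List α) (b : α), p ++ [b] <+: w → subk k p ≠ subk k (p ++ [b]) := by
    intro p b hp hEq
    have h1 : p <+: w := (List.prefix_append p [b]).trans hp
    have h2 := hpref p (p ++ [b]) h1 hp hEq
    have := congrArg List.length h2
    simp at this
  have h := Stmt16Aux.main (k + n) k Finset.univ w (by simp [hcard, Nat.add_comm])
    (fun a _ => Finset.mem_univ a) hs
  simp only [Finset.card_univ, hcard] at h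
  rwa [Nat.add_comm n k] at h
end

section
/- For all integers k ≥ 1 and n ≥ 1: (i) every k-piecewise testable language over an alphabet of n letters is recognized by a minimal DFA of depth at most C(k+n, k) − 1; and (ii) there exists a k-piecewise testable language over an alphabet of n letters whose minimal DFA has depth exactly C(k+n, k) − 1. -/
namespace PT18
open List

variable {α : Type*}

theorem mem_subk {k : ℕ} {w u : List α} : u ∈ subk k w ↔ u.length ≤ k ∧ u <+ w := Iff.rfl

theorem subk_mono {u v : List α} (h : u <+ v) (k : ℕ) : subk k u ⊆ subk k v :=
  fun _ hw => ⟨hw.1, hw.2.trans h⟩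

theorem subk_zero (w : List α) : subk 0 w = {[]} := by
  ext u
  constructor
  · rintro ⟨h1, -⟩
    exact List.length_eq_zero_iff.1 (Nat.le_zero.1 h1)
  · rintro rfl
    exact ⟨Nat.le_refl 0, List.nil_sublist w⟩

open Classical in
noncomputable def incP (k : ℕ) (w : List α) : ℕ → Bool :=
  fun i => decide (subk k (w.take (i+1)) ≠ subk k (w.take i))

noncomputable def inc (k : ℕ) (w : List α) : ℕ :=
  (List.range w.length).countP (incP k w)

open Classical in
theorem incP_iff {k : ℕ} {w : List α} {i : ℕ} :
    incP k w i = true ↔ subk k (w.take (i+1)) ≠ subk k (w.take i) := by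
  unfold incP
  exact decide_eq_true_iff

theorem inc_zero (w : List α) : inc 0 w = 0 := by
  unfold inc
  rw [List.countP_eq_zero]
  intro i _
  rw [Bool.not_eq_true, ← Bool.not_eq_true, incP_iff, not_ne_iff, subk_zero, subk_zero]

theorem inc_nil (k : ℕ) : inc k ([] : List α) = 0 := by
  unfold inc
  simp

theorem subk_append_subset {k : ℕ} {p v v' : List α}
    (hall : ∀ b ∈ v, b ∈ p)
    (hsub : subk k v ⊆ subk k v') :
    subk (k+1) (p ++ v) ⊆ subk (k+1) (p ++ v') := by
  intro u hu
  obtain ⟨hlen, hsl⟩ := hu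
  rw [List.sublist_append_iff] at hsl
  obtain ⟨u1, u2, rfl, h1, h2⟩ := hsl
  by_cases hlen2 : u2.length ≤ k
  · have h2' : u2 <+ v' := (hsub ⟨hlen2, h2⟩).2
    exact ⟨hlen, List.Sublist.append h1 h2'⟩
  · -- u2.length = k+1, u1 = []
    have hlen1 : u1.length = 0 := by
      have := @List.length_append _ u1 u2
      omega
    have hu1 : u1 = [] := List.length_eq_zero_iff.1 hlen1
    subst hu1
    cases u2 with
    | nil => exact (hlen2 (by simp)).elim
    | cons a u2' =>
      have ha : a ∈ v := h2.subset (@List.mem_cons_self _ a u2')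
      have hap : a ∈ p := hall a ha
      have h2'' : u2' <+ v := (List.sublist_cons_self a u2').trans h2
      have hlen2' : u2'.length ≤ k := by
        have h := hlen
        simp only [List.nil_append, List.length_cons] at h
        omega
      have hv' : u2' <+ v' := (hsub ⟨hlen2', h2''⟩).2
      have : ([a] ++ u2') <+ p ++ v' :=
        List.Sublist.append (List.singleton_sublist.2 hap) hv'
      exact ⟨hlen, by simpa using this⟩

theorem exists_decomp (w : List α) (hw : w ≠ []) :
    ∃ p a v, w = p ++ a :: v ∧ a ∉ p ∧ ∀ b ∈ v, b ∈ p ++ [a] := by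
  induction w using List.reverseRecOn with
  | nil => exact absurd rfl hw
  | append_singleton w' c ih =>
    rcases eq_or_ne w' [] with rfl | hne
    · exact ⟨[], c, [], by simp, by simp, by simp⟩
    · obtain ⟨p, a, v, heq, hna, hv⟩ := ih hne
      by_cases hc : c ∈ p ++ [a]
      · refine ⟨p, a, v ++ [c], ?_, hna, ?_⟩
        · rw [heq]; simp
        · intro b hb
          rcases List.mem_append.1 hb with hb | hb
          · exact hv b hb
          · rw [List.mem_singleton.1 hb]; exact hc
      · refine ⟨w', c, [], by simp, ?_, by simp⟩
        intro hcw
        rw [heq] at hcw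
        rcases List.mem_append.1 hcw with h | h
        · exact hc (List.mem_append.2 (Or.inl h))
        · rcases List.mem_cons.1 h with rfl | h
          · exact hc (List.mem_append.2 (Or.inr (List.mem_singleton.2 rfl)))
          · exact hc (hv _ h)

theorem inc_bound [DecidableEq α] :
    ∀ (N k : ℕ) (S : Finset α) (w : List α), k + w.length ≤ N →
    (∀ b ∈ w, b ∈ S) → inc k w + 1 ≤ (S.card + k).choose k := by
  intro N
  induction N with
  | zero =>
    intro k S w h hw
    have hk : k = 0 := by omega
    subst hk
    rw [inc_zero]
    simp
  | succ N ih =>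
    intro k S w hN hw
    match k with
    | 0 => rw [inc_zero]; simp
    | (k'+1) =>
      rcases eq_or_ne w [] with rfl | hwne
      · rw [inc_nil]
        have : 0 < (S.card + (k'+1)).choose (k'+1) :=
          Nat.choose_pos (by omega)
        omega
      · obtain ⟨p, a, v, heq, hna, hv⟩ := exists_decomp w hwne
        set k := k' + 1 with hk
        have haS : a ∈ S := hw a (by
          rw [heq]; exact List.mem_append.2 (Or.inr (@List.mem_cons_self _ a v)))
        have hlenw : w.length = p.length + (1 + v.length) := by
          rw [heq]; simp; omega
        have hsplit : inc k w = (List.range p.length).countP (incP k w)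
            + ((List.range 1).countP ((incP k w) ∘ (fun j => p.length + j))
               + (List.range v.length).countP
                   (((incP k w) ∘ (fun j => p.length + j)) ∘ (fun j => 1 + j))) := by
          unfold inc
          rw [hlenw, List.range_add, List.countP_append, List.countP_map,
            List.range_add, List.countP_append, List.countP_map]
        have hpart1 : (List.range p.length).countP (incP k w) = inc k p := by
          unfold inc
          have : ∀ i ∈ List.range p.length, incP k w i = incP k p i := by
            intro i hi
            rw [List.mem_range] at hi
            unfold incP
            rw [decide_eq_decide, heq, List.take_append_of_le_length (by omega),
              List.take_append_of_le_length (by omega)]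
          exact le_antisymm
            (List.countP_mono_left (fun x hx h => by rwa [← this x hx]))
            (List.countP_mono_left (fun x hx h => by rwa [this x hx]))
        have htake : ∀ t : ℕ, w.take (p.length + (1 + t)) = (p ++ [a]) ++ v.take t := by
          intro t
          have hq : w = (p ++ [a]) ++ v := by rw [heq]; simp
          have hl : p.length + (1 + t) = (p ++ [a]).length + t := by simp; omega
          rw [hq, hl, List.take_length_add_append]
        have hpart3 : (List.range v.length).countP
            (((incP k w) ∘ (fun j => p.length + j)) ∘ (fun j => 1 + j)) ≤ inc k' v := by
          unfold inc
          apply List.countP_mono_left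
          intro j hj hPj
          simp only [Function.comp] at hPj
          rw [incP_iff] at hPj
          rw [incP_iff]
          have h1 : p.length + (1 + j) + 1 = p.length + (1 + (j+1)) := by omega
          rw [h1, htake, htake] at hPj
          by_contra hQ
          apply hPj
          have hall1 : ∀ b ∈ v.take (j+1), b ∈ p ++ [a] :=
            fun b hb => hv b ((List.take_sublist _ _).subset hb)
          have hall2 : ∀ b ∈ v.take j, b ∈ p ++ [a] :=
            fun b hb => hv b ((List.take_sublist _ _).subset hb)
          exact Set.Subset.antisymm
            (subk_append_subset hall1 (le_of_eq hQ))
            (subk_append_subset hall2 (le_of_eq hQ.symm))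
        have hmid : (List.range 1).countP ((incP k w) ∘ (fun j => p.length + j)) ≤ 1 := by
          calc (List.range 1).countP ((incP k w) ∘ (fun j => p.length + j))
              ≤ (List.range 1).length := List.countP_le_length
            _ = 1 := by simp
        have hIH1 : inc k p + 1 ≤ ((S.erase a).card + k).choose k := by
          apply ih k (S.erase a) p
          · have : w.length = p.length + v.length + 1 := by omega
            omega
          · intro b hb
            rw [Finset.mem_erase]
            refine ⟨?_, hw b (by rw [heq]; exact List.mem_append.2 (Or.inl hb))⟩
            rintro rfl
            exact hna hb
        have hIH2 : inc k' v + 1 ≤ (S.card + k').choose k' := by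
          apply ih k' S v
          · omega
          · intro b hb
            exact hw b (by
              rw [heq]; exact List.mem_append.2 (Or.inr (List.mem_cons_of_mem a hb)))
        obtain ⟨s, hs⟩ : ∃ s, S.card = s + 1 := by
          have : 0 < S.card := Finset.card_pos.2 ⟨a, haS⟩
          exact ⟨S.card - 1, by omega⟩
        have hcerase : (S.erase a).card = s := by
          rw [Finset.card_erase_of_mem haS, hs]
          omega
        have hpascal : (S.card + k).choose k
            = ((S.erase a).card + k).choose k + (S.card + k').choose k' := by
          rw [hcerase, hs, hk]
          have h1 : s + 1 + (k' + 1) = (s + (k'+1)) + 1 := by omega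
          have h2 : s + 1 + k' = s + (k' + 1) := by omega
          rw [h1, h2, Nat.choose_succ_succ' (s + (k'+1)) k']
          omega
        omega

theorem subk_append_mono {k : ℕ} {u v : List α} (h : subk k u ⊆ subk k v) (x : List α) :
    subk k (u ++ x) ⊆ subk k (v ++ x) := by
  intro w hw
  obtain ⟨hlen, hsl⟩ := hw
  rw [List.sublist_append_iff] at hsl
  obtain ⟨w1, w2, rfl, h1, h2⟩ := hsl
  have hw1 : w1 <+ v := (h ⟨by
    have := @List.length_append _ w1 w2; omega, h1⟩).2
  exact ⟨hlen, List.Sublist.append hw1 h2⟩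

theorem kEquiv_append {k : ℕ} {u v : List α} (h : kEquiv k u v) (x : List α) :
    kEquiv k (u ++ x) (v ++ x) :=
  Set.Subset.antisymm (subk_append_mono (le_of_eq h) x) (subk_append_mono (le_of_eq h.symm) x)

/-- The Nerode (Myhill) right congruence. -/
def nerode (L : Language α) : Setoid (List α) where
  r u v := ∀ x, (u ++ x) ∈ L ↔ (v ++ x) ∈ L
  iseqv := ⟨fun _ _ => Iff.rfl, fun h x => (h x).symm, fun h h' x => (h x).trans (h' x)⟩

/-- The Nerode-quotient DFA. -/
def nDFA (L : Language α) : DFA α (Quotient (nerode L)) where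
  step q a := Quotient.lift (fun u => (⟦u ++ [a]⟧ : Quotient (nerode L)))
    (by
      intro u v huv
      apply Quotient.sound
      intro x
      have := huv ([a] ++ x)
      simpa [List.append_assoc] using this) q
  start := ⟦[]⟧
  accept := {q | Quotient.lift (fun u => u ∈ L)
    (by
      intro u v huv
      have := huv []
      simp only [List.append_nil] at this
      exact propext this) q}

theorem nDFA_evalFrom (L : Language α) (x : List α) :
    ∀ u : List α, (nDFA L).evalFrom ⟦u⟧ x = ⟦u ++ x⟧ := by
  induction x with
  | nil => intro u; simp [DFA.evalFrom]
  | cons a x ih =>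
    intro u
    have h1 : (nDFA L).evalFrom ⟦u⟧ (a :: x) = (nDFA L).evalFrom ((nDFA L).step ⟦u⟧ a) x := rfl
    have h2 : (nDFA L).step ⟦u⟧ a = ⟦u ++ [a]⟧ := rfl
    rw [h1, h2, ih]
    simp

theorem nDFA_eval (L : Language α) (x : List α) : (nDFA L).eval x = ⟦x⟧ := by
  have : (nDFA L).eval x = (nDFA L).evalFrom ⟦([] : List α)⟧ x := rfl
  rw [this, nDFA_evalFrom]
  simp

theorem nDFA_accept_iff (L : Language α) (u : List α) :
    (⟦u⟧ : Quotient (nerode L)) ∈ (nDFA L).accept ↔ u ∈ L := Iff.rfl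

theorem nDFA_accepts (L : Language α) : (nDFA L).accepts = L := by
  ext x
  rw [DFA.mem_accepts, nDFA_eval]
  exact nDFA_accept_iff L x

theorem nDFA_minimal (L : Language α) : IsMinimalDFA (nDFA L) := by
  constructor
  · intro q
    induction q using Quotient.ind with
    | _ u => exact ⟨u, nDFA_eval L u⟩
  · intro p q
    induction p using Quotient.ind with
    | _ u =>
      induction q using Quotient.ind with
      | _ v =>
        intro h
        apply Quotient.sound
        intro x
        have := h x
        rw [nDFA_evalFrom, nDFA_evalFrom, nDFA_accept_iff, nDFA_accept_iff] at this
        exact this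

open Classical in
/-- Signature of a word: which short words are subwords. -/
noncomputable def sig (k : ℕ) (w : List α) : {l : List α // l.length ≤ k} → Bool :=
  fun l => decide (l.val <+ w)

open Classical in
theorem sig_eq (k : ℕ) {u v : List α} (h : sig k u = sig k v) : kEquiv k u v := by
  ext w
  constructor
  · rintro ⟨h1, h2⟩
    refine ⟨h1, ?_⟩
    have := congrFun h ⟨w, h1⟩
    unfold sig at this
    rw [decide_eq_decide] at this
    exact this.1 h2
  · rintro ⟨h1, h2⟩
    refine ⟨h1, ?_⟩
    have := congrFun h ⟨w, h1⟩
    unfold sig at this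
    rw [decide_eq_decide] at this
    exact this.2 h2

noncomputable instance fintypeShortLists [Fintype α] (k : ℕ) : Fintype {l : List α // l.length ≤ k} := by
  classical
  apply Fintype.ofInjective (fun l : {l : List α // l.length ≤ k} =>
    (fun i : Fin k => l.val[i.val]?))
  intro l₁ l₂ h
  apply Subtype.ext
  apply List.ext_getElem?
  intro n
  by_cases hn : n < k
  · exact congrFun h ⟨n, hn⟩
  · have h1 : l₁.val[n]? = none := List.getElem?_eq_none_iff.2 (by omega)
    have h2 : l₂.val[n]? = none := List.getElem?_eq_none_iff.2 (by omega)
    rw [h1, h2]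

theorem nerode_finite [Fintype α] (k : ℕ) (L : Language α) (hPT : IsPT k L) :
    Finite (Quotient (nerode L)) := by
  have key : ∀ u v : List α, sig k u = sig k v → (nerode L) u v := by
    intro u v h x
    exact hPT _ _ (kEquiv_append (sig_eq k h) x)
  have : ∀ t : Set.range (@sig α k), ∃ u : List α, sig k u = t.val := fun t => t.2
  let f : Set.range (@sig α k) → Quotient (nerode L) :=
    fun t => ⟦Classical.choose t.2⟧
  apply Finite.of_surjective f
  intro q
  induction q using Quotient.ind with
  | _ u =>
    refine ⟨⟨sig k u, ⟨u, rfl⟩⟩, ?_⟩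
    apply Quotient.sound
    apply key
    exact Classical.choose_spec (⟨u, rfl⟩ : ∃ w, sig k w = sig k u)

theorem evalFrom_append {σ : Type*} (A : DFA α σ) (s : σ) (x y : List α) :
    A.evalFrom s (x ++ y) = A.evalFrom (A.evalFrom s x) y :=
  List.foldl_append

theorem path_le {σ : Type*} [Fintype α] {n k : ℕ} (hcard : Fintype.card α = n)
    {L : Language α} (hPT : IsPT k L) (A : DFA α σ) (hmin : IsMinimalDFA A)
    (hacc : A.accepts = L) {m : ℕ} (hpath : DFAHasSimplePath A m) :
    m + 1 ≤ (k + n).choose k := by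
  classical
  obtain ⟨qs, as, hinj, hstep⟩ := hpath
  obtain ⟨u₀, hu₀⟩ := hmin.1 (qs 0)
  set ws : List α := List.ofFn as with hws
  have hwslen : ws.length = m := List.length_ofFn
  have heval : ∀ i : ℕ, (h : i ≤ m) → A.eval (u₀ ++ ws.take i) = qs ⟨i, by omega⟩ := by
    intro i
    induction i with
    | zero =>
      intro h
      have h0 : ws.take 0 = [] := rfl
      rw [h0, List.append_nil]
      exact hu₀
    | succ i ih =>
      intro h
      have hi : i ≤ m := by omega
      have hilt : i < ws.length := by omega
      have hilt' : i < (List.ofFn as).length := by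
        rw [List.length_ofFn]; omega
      have htake : ws.take (i+1) = ws.take i ++ [as ⟨i, by omega⟩] := by
        rw [← List.take_concat_get hilt, List.concat_eq_append]
        congr 2
        · show (List.ofFn as)[i] = _
          rw [List.getElem_ofFn]
      rw [htake, ← List.append_assoc, DFA.eval_append_singleton, ih hi]
      have := hstep ⟨i, by omega⟩
      exact this
  have hdist : ∀ i j : ℕ, i ≤ m → j ≤ m → i ≠ j →
      subk k (u₀ ++ ws.take i) ≠ subk k (u₀ ++ ws.take j) := by
    intro i j hi hj hne heq
    have hLiff : ∀ x, ((u₀ ++ ws.take i) ++ x) ∈ L ↔ ((u₀ ++ ws.take j) ++ x) ∈ L :=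
      fun x => hPT _ _ (kEquiv_append heq x)
    have hqs : qs ⟨i, by omega⟩ = qs ⟨j, by omega⟩ := by
      apply hmin.2
      intro x
      have e1 : A.evalFrom (qs ⟨i, by omega⟩) x = A.eval ((u₀ ++ ws.take i) ++ x) := by
        rw [← heval i hi]
        exact (evalFrom_append A _ _ _).symm
      have e2 : A.evalFrom (qs ⟨j, by omega⟩) x = A.eval ((u₀ ++ ws.take j) ++ x) := by
        rw [← heval j hj]
        exact (evalFrom_append A _ _ _).symm
      rw [e1, e2, ← DFA.mem_accepts, ← DFA.mem_accepts, hacc]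
      exact hLiff x
    have := hinj hqs
    rw [Fin.mk.injEq] at this
    exact hne this
  have hcount : m ≤ inc k (u₀ ++ ws) := by
    unfold inc
    have hlen : (u₀ ++ ws).length = u₀.length + m := by
      rw [List.length_append, hwslen]
    rw [hlen, List.range_add, List.countP_append, List.countP_map]
    have hfull : (List.range m).countP ((incP k (u₀ ++ ws)) ∘ (fun x => u₀.length + x)) = m := by
      have hiff := List.countP_eq_length (l := List.range m)
        (p := (incP k (u₀ ++ ws)) ∘ (fun x => u₀.length + x))
      rw [List.length_range] at hiff
      apply hiff.2
      intro i hi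
      rw [List.mem_range] at hi
      simp only [Function.comp]
      rw [incP_iff]
      have ht : ∀ t : ℕ, (u₀ ++ ws).take (u₀.length + t) = u₀ ++ ws.take t :=
        fun t => List.take_length_add_append t
      have h1 : u₀.length + i + 1 = u₀.length + (i + 1) := by omega
      rw [h1, ht, ht]
      exact hdist (i+1) i (by omega) (by omega) (by omega)
    omega
  have hbound := inc_bound (k + (u₀ ++ ws).length) k (Finset.univ : Finset α) (u₀ ++ ws)
    (le_refl _) (fun b _ => Finset.mem_univ b)
  rw [Finset.card_univ, hcard] at hbound
  have hcomm : (n + k).choose k = (k + n).choose k := by rw [Nat.add_comm]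
  omega

theorem depth_le_of_minimal {σ : Type*} [Fintype α] {n k : ℕ} (hcard : Fintype.card α = n)
    {L : Language α} (hPT : IsPT k L) (A : DFA α σ) (hmin : IsMinimalDFA A)
    (hacc : A.accepts = L) : dfaDepth A ≤ (k + n).choose k - 1 := by
  apply csSup_le
  · refine ⟨0, fun _ => A.start, fun i => i.elim0, fun a b _ => Fin.ext (by omega),
      fun i => i.elim0⟩
  · intro b hb
    have := path_le hcard hPT A hmin hacc hb
    omega

/-- everything after the first occurrence of `a`. -/
def tailAfter (a : ℕ) : List ℕ → List ℕ
  | [] => []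
  | b :: u => if b = a then u else tailAfter a u

@[simp] theorem tailAfter_nil (a : ℕ) : tailAfter a [] = [] := rfl
@[simp] theorem tailAfter_cons_self (a : ℕ) (u : List ℕ) : tailAfter a (a :: u) = u := by
  simp [tailAfter]
theorem tailAfter_cons_ne {a b : ℕ} (h : b ≠ a) (u : List ℕ) :
    tailAfter a (b :: u) = tailAfter a u := by
  simp [tailAfter, h]

theorem tailAfter_append_left {a : ℕ} {u : List ℕ} (h : a ∈ u) (v : List ℕ) :
    tailAfter a (u ++ v) = tailAfter a u ++ v := by
  induction u with
  | nil => simp at h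
  | cons b u ih =>
    by_cases hb : b = a
    · subst hb; simp
    · rw [List.cons_append, tailAfter_cons_ne hb, tailAfter_cons_ne hb]
      apply ih
      rcases List.mem_cons.1 h with h' | h'
      · exact absurd h'.symm hb
      · exact h'

theorem tailAfter_of_not_mem_left {a : ℕ} {x : List ℕ} (h : a ∉ x) (y : List ℕ) :
    tailAfter a (x ++ a :: y) = y := by
  induction x with
  | nil => simp
  | cons b x ih =>
    have hb : b ≠ a := fun hb => h (hb ▸ @List.mem_cons_self _ b x)
    rw [List.cons_append, tailAfter_cons_ne hb]
    exact ih (fun hx => h (List.mem_cons_of_mem b hx))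

theorem exists_split {a : ℕ} {u : List ℕ} (h : a ∈ u) :
    ∃ x, a ∉ x ∧ u = x ++ a :: tailAfter a u := by
  induction u with
  | nil => simp at h
  | cons b u ih =>
    by_cases hb : b = a
    · subst hb
      exact ⟨[], by simp, by simp⟩
    · obtain ⟨x, hx, hu⟩ := ih (by
        rcases List.mem_cons.1 h with h' | h'
        · exact absurd h'.symm hb
        · exact h')
      refine ⟨b :: x, ?_, ?_⟩
      · intro hmem
        rcases List.mem_cons.1 hmem with h' | h'
        · exact hb h'.symm
        · exact hx h'
      · rw [tailAfter_cons_ne hb, List.cons_append, ← hu]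

/-- The recursively defined witness language (membership predicate), over `ℕ`
with active alphabet `{0, ..., m-1}`. -/
def member : ℕ → ℕ → List ℕ → Prop
  | 0, _, _ => False
  | 1, m, u => ∀ j < m, j ∈ u
  | (k+2), 0, _ => False
  | (k+2), (m+1), u =>
    if m ∈ u then member (k+1) (m+1) (tailAfter m u)
    else member (k+2) m u
termination_by k m _ => (k, m)

theorem member_one (m : ℕ) (u : List ℕ) : member 1 m u ↔ ∀ j < m, j ∈ u := by
  rw [member]

theorem member_succ_mem {k m : ℕ} {u : List ℕ} (h : m ∈ u) :
    member (k+2) (m+1) u ↔ member (k+1) (m+1) (tailAfter m u) := by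
  rw [member, if_pos h]

theorem member_succ_not_mem {k m : ℕ} {u : List ℕ} (h : m ∉ u) :
    member (k+2) (m+1) u ↔ member (k+2) m u := by
  rw [member, if_neg h]

theorem member_succ_zero (k : ℕ) (u : List ℕ) : ¬ member (k+2) 0 u := by
  rw [member]
  exact id

/-- The witness word (over `ℕ`). -/
def W : ℕ → ℕ → List ℕ
  | 0, _ => []
  | 1, m => List.range m
  | (k+2), 0 => []
  | (k+2), (m+1) => W (k+2) m ++ m :: W (k+1) (m+1)
termination_by k m => (k, m)

theorem W_one (m : ℕ) : W 1 m = List.range m := by rw [W]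
theorem W_succ_zero (k : ℕ) : W (k+2) 0 = [] := by rw [W]
theorem W_succ_succ (k m : ℕ) : W (k+2) (m+1) = W (k+2) m ++ m :: W (k+1) (m+1) := by
  rw [W]

/-- `j` copies of `range m`. -/
def Urep (m : ℕ) : ℕ → List ℕ
  | 0 => []
  | j+1 => List.range m ++ Urep m j

theorem W_letters : ∀ k m, ∀ c ∈ W k m, c < m
  | 0, m => by rw [W]; intro c hc; simp at hc
  | 1, m => by rw [W_one]; intro c hc; exact List.mem_range.1 hc
  | (k+2), 0 => by rw [W_succ_zero]; intro c hc; simp at hc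
  | (k+2), (m+1) => by
    rw [W_succ_succ]
    intro c hc
    rcases List.mem_append.1 hc with h | h
    · exact lt_trans (W_letters (k+2) m c h) (Nat.lt_succ_self m)
    · rcases List.mem_cons.1 h with rfl | h
      · exact Nat.lt_succ_self _
      · exact W_letters (k+1) (m+1) c h
termination_by k m => (k, m)

theorem Urep_letters (m : ℕ) : ∀ j, ∀ c ∈ Urep m j, c < m := by
  intro j
  induction j with
  | zero => intro c hc; simp [Urep] at hc
  | succ j ih =>
    intro c hc
    rcases List.mem_append.1 hc with h | h
    · exact List.mem_range.1 h
    · exact ih c h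

theorem W_length : ∀ k m, 1 ≤ k → (W k m).length + 1 = (k + m).choose k
  | 0, m => by omega
  | 1, m => by
    intro _
    rw [W_one, List.length_range, Nat.add_comm 1 m, Nat.choose_one_right]
  | (k+2), 0 => by
    intro _
    rw [W_succ_zero]
    simp
  | (k+2), (m+1) => by
    intro _
    rw [W_succ_succ]
    have h1 := W_length (k+2) m (by omega)
    have h2 := W_length (k+1) (m+1) (by omega)
    have hp : (k+2+(m+1)).choose (k+2) = (k+2+m).choose (k+2) + (k+1+(m+1)).choose (k+1) := by
      have h := Nat.choose_succ_succ' (k+m+2) (k+1)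
      rw [show k+1+1 = k+2 from rfl, show k+m+2+1 = k+2+(m+1) by ring] at h
      rw [show (k+m+2).choose (k+1) = (k+1+(m+1)).choose (k+1) by rw [show k+m+2 = k+1+(m+1) by ring],
        show (k+m+2).choose (k+2) = (k+2+m).choose (k+2) by rw [show k+m+2 = k+2+m by ring]] at h
      omega
    simp only [List.length_append, List.length_cons]
    omega
termination_by k m => (k, m)


theorem kEquiv_mem {k : ℕ} {u v : List α} (h : kEquiv k u v) (hk : 1 ≤ k) (c : α) :
    c ∈ u ↔ c ∈ v := by
  constructor
  · intro hc
    have : [c] ∈ subk k u := ⟨by simpa using hk, List.singleton_sublist.2 hc⟩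
    rw [h] at this
    exact List.singleton_sublist.1 this.2
  · intro hc
    have : [c] ∈ subk k v := ⟨by simpa using hk, List.singleton_sublist.2 hc⟩
    rw [← h] at this
    exact List.singleton_sublist.1 this.2

theorem kEquiv_mono {k j : ℕ} {u v : List α} (h : kEquiv k u v) (hj : j ≤ k) :
    kEquiv j u v := by
  ext w
  constructor
  · rintro ⟨h1, h2⟩
    have : w ∈ subk k u := ⟨h1.trans hj, h2⟩
    rw [h] at this
    exact ⟨h1, this.2⟩
  · rintro ⟨h1, h2⟩
    have : w ∈ subk k v := ⟨h1.trans hj, h2⟩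
    rw [← h] at this
    exact ⟨h1, this.2⟩

theorem cons_sublist_of_not_mem {a : α} {w y : List α} :
    ∀ {x : List α}, (a :: w) <+ x ++ a :: y → a ∉ x → w <+ y := by
  intro x
  induction x with
  | nil =>
    intro h _
    simp only [List.nil_append] at h
    cases h with
    | cons _ h' => exact (List.sublist_cons_self a w).trans h'
    | cons_cons _ h' => exact h'
  | cons b x ih =>
    intro h hmem
    rw [List.cons_append] at h
    cases h with
    | cons _ h' => exact ih h' (fun hx => hmem (List.mem_cons_of_mem _ hx))
    | cons_cons _ h' => exact absurd (@List.mem_cons_self _ a x) hmem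

theorem kEquiv_tailAfter {k : ℕ} {a : ℕ} {u v : List ℕ} (h : kEquiv (k+1) u v)
    (hu : a ∈ u) (hv : a ∈ v) : kEquiv k (tailAfter a u) (tailAfter a v) := by
  obtain ⟨x, hx, hxu⟩ := exists_split hu
  obtain ⟨y, hy, hyv⟩ := exists_split hv
  have key : ∀ {p q : List ℕ} {s t : List ℕ}, kEquiv (k+1) p q → a ∉ t →
      q = t ++ a :: tailAfter a q → p = s ++ a :: tailAfter a p →
      subk k (tailAfter a p) ⊆ subk k (tailAfter a q) := by
    intro p q s t hpq ht hqeq hpeq w hw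
    obtain ⟨h1, h2⟩ := hw
    have hin : (a :: w) ∈ subk (k+1) p := by
      refine ⟨by simpa using h1, ?_⟩
      rw [hpeq]
      exact ((h2.cons₂ a).trans (List.sublist_append_right s _))
    rw [hpq] at hin
    obtain ⟨h3, h4⟩ := hin
    rw [hqeq] at h4
    exact ⟨h1, cons_sublist_of_not_mem h4 ht⟩
  exact Set.Subset.antisymm (key h hy hyv hxu) (key h.symm hx hxu hyv)

theorem member_invariant : ∀ k m (u v : List ℕ), kEquiv k u v →
    (member k m u ↔ member k m v)
  | 0, m, u, v => by
    intro _
    rw [member, member]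
  | 1, m, u, v => by
    intro h
    rw [member_one, member_one]
    constructor
    · intro hj j hjm
      exact (kEquiv_mem h (le_refl 1) j).1 (hj j hjm)
    · intro hj j hjm
      exact (kEquiv_mem h (le_refl 1) j).2 (hj j hjm)
  | (k+2), 0, u, v => by
    intro _
    rw [member, member]
  | (k+2), (m+1), u, v => by
    intro h
    by_cases hm : m ∈ u
    · have hmv : m ∈ v := (kEquiv_mem h (by omega) m).1 hm
      rw [member_succ_mem hm, member_succ_mem hmv]
      exact member_invariant (k+1) (m+1) _ _ (kEquiv_tailAfter h hm hmv)
    · have hmv : m ∉ v := fun hc => hm ((kEquiv_mem h (by omega) m).2 hc)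
      rw [member_succ_not_mem hm, member_succ_not_mem hmv]
      exact member_invariant (k+2) m u v h
termination_by k m => (k, m)

theorem not_member_Urep : ∀ k m, 1 ≤ m → ¬ member (k+1) m (Urep m k) := by
  intro k
  induction k with
  | zero =>
    intro m hm hmem
    rw [member_one] at hmem
    have := hmem 0 (by omega)
    simp [Urep] at this
  | succ k ih =>
    intro m hm hmem
    obtain ⟨m', rfl⟩ : ∃ m', m = m' + 1 := ⟨m - 1, by omega⟩
    have hsplit : Urep (m'+1) (k+1) = (List.range m' ++ [m']) ++ (Urep (m'+1) k) := by
      show List.range (m'+1) ++ Urep (m'+1) k = _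
      rw [List.range_succ]
    have hmm : m' ∈ Urep (m'+1) (k+1) := by
      rw [hsplit]
      exact List.mem_append.2 (Or.inl (List.mem_append.2 (Or.inr (List.mem_singleton.2 rfl))))
    rw [member_succ_mem hmm] at hmem
    have htail : tailAfter m' (Urep (m'+1) (k+1)) = Urep (m'+1) k := by
      rw [hsplit, List.append_assoc, List.singleton_append]
      exact tailAfter_of_not_mem_left (by simp) _
    rw [htail] at hmem
    exact ih (m'+1) (by omega) hmem

theorem member_append_Urep : ∀ k m (v : List ℕ), 1 ≤ m → member (k+1) m (v ++ Urep m (k+1)) := by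
  intro k
  induction k with
  | zero =>
    intro m v hm
    rw [member_one]
    intro j hj
    have : j ∈ List.range m := List.mem_range.2 hj
    show j ∈ v ++ (List.range m ++ Urep m 0)
    exact List.mem_append.2 (Or.inr (List.mem_append.2 (Or.inl this)))
  | succ k ih =>
    intro m v hm
    obtain ⟨m', rfl⟩ : ∃ m', m = m' + 1 := ⟨m - 1, by omega⟩
    have hrep : Urep (m'+1) (k+2) = List.range (m'+1) ++ Urep (m'+1) (k+1) := rfl
    have hmm : m' ∈ v ++ Urep (m'+1) (k+2) := by
      rw [hrep]
      refine List.mem_append.2 (Or.inr (List.mem_append.2 (Or.inl ?_)))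
      exact List.mem_range.2 (by omega)
    rw [member_succ_mem hmm]
    by_cases hv : m' ∈ v
    · rw [tailAfter_append_left hv]
      have : tailAfter m' v ++ Urep (m'+1) (k+2)
          = (tailAfter m' v ++ List.range (m'+1)) ++ Urep (m'+1) (k+1) := by
        rw [hrep, List.append_assoc]
      rw [this]
      exact ih (m'+1) _ (by omega)
    · have heq : v ++ Urep (m'+1) (k+2)
          = (v ++ List.range m') ++ m' :: Urep (m'+1) (k+1) := by
        rw [hrep, List.range_succ, List.append_assoc, List.append_assoc]
        rfl
      rw [heq, tailAfter_of_not_mem_left (by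
        intro hc
        rcases List.mem_append.1 hc with hc | hc
        · exact hv hc
        · exact absurd (List.mem_range.1 hc) (lt_irrefl m')) _]
      have : Urep (m'+1) (k+1) = [] ++ Urep (m'+1) (k+1) := by simp
      rw [this]
      exact ih (m'+1) [] (by omega)

theorem dist : ∀ k m, 1 ≤ k → ∀ i j, i < j → j ≤ (W k m).length →
    ∃ x : List ℕ, (∀ c ∈ x, c < m) ∧
      ¬ (member k m ((W k m).take i ++ x) ↔ member k m ((W k m).take j ++ x))
  | 0, m => by omega
  | 1, m => by
    intro _ i j hij hj
    rw [W_one, List.length_range] at hj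
    rw [W_one]
    have him : i < m := by omega
    refine ⟨(List.range m).filter (fun c => c != i), ?_, ?_⟩
    · intro c hc
      exact List.mem_range.1 (List.mem_of_mem_filter hc)
    · have htki : (List.range m).take i = List.range i := by
        rw [List.take_range, Nat.min_def, if_pos (by omega)]
      have htkj : (List.range m).take j = List.range j := by
        rw [List.take_range, Nat.min_def, if_pos (by omega)]
      rw [htki, htkj, member_one, member_one]
      intro hiff
      have hR : ∀ t < m, t ∈ List.range j ++ (List.range m).filter (fun c => c != i) := by
        intro t ht
        by_cases htj : t < j
        · exact List.mem_append.2 (Or.inl (List.mem_range.2 htj))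
        · refine List.mem_append.2 (Or.inr ?_)
          rw [List.mem_filter]
          refine ⟨List.mem_range.2 ht, ?_⟩
          rw [bne_iff_ne]
          omega
      have hL := hiff.2 hR
      have := hL i him
      rcases List.mem_append.1 this with hc | hc
      · exact absurd (List.mem_range.1 hc) (lt_irrefl i)
      · rw [List.mem_filter, bne_iff_ne] at hc
        exact hc.2 rfl
  | (k+2), 0 => by
    intro _ i j hij hj
    rw [W_succ_zero] at hj
    simp at hj
    omega
  | (k+2), (m+1) => by
    intro _ i j hij hj
    have hW := W_succ_succ k m
    have hlen : (W (k+2) (m+1)).length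
        = (W (k+2) m).length + 1 + (W (k+1) (m+1)).length := by
      rw [hW]; simp; omega
    set W₁ := W (k+2) m with hW₁
    set W₂ := W (k+1) (m+1) with hW₂
    have hW₁letters : ∀ c ∈ W₁, c < m := W_letters (k+2) m
    have hmW₁ : m ∉ W₁ := fun hc => absurd (hW₁letters m hc) (lt_irrefl m)
    have htk1 : ∀ t, t ≤ W₁.length → (W (k+2) (m+1)).take t = W₁.take t := by
      intro t ht
      rw [hW]
      exact List.take_append_of_le_length ht
    have htk2 : ∀ t, (W (k+2) (m+1)).take (W₁.length + 1 + t) = W₁ ++ m :: W₂.take t := by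
      intro t
      rw [hW]
      have h1 : W₁.length + 1 + t = W₁.length + (1 + t) := by omega
      rw [h1, List.take_length_add_append]
      congr 1
      have h2 : 1 + t = t + 1 := by omega
      rw [h2]
      rfl
    -- case split
    rcases le_or_gt j W₁.length with hcase1 | hcase2
    · -- both in part 1
      obtain ⟨x, hx, hne⟩ := dist (k+2) m (by omega) i j hij hcase1
      refine ⟨x, fun c hc => lt_trans (hx c hc) (Nat.lt_succ_self m), ?_⟩
      rw [htk1 i (by omega), htk1 j (by omega)]
      have hnm : ∀ t, t ≤ W₁.length → m ∉ W₁.take t ++ x := by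
        intro t ht hc
        rcases List.mem_append.1 hc with hc | hc
        · exact absurd (hW₁letters m ((List.take_sublist t W₁).subset hc)) (lt_irrefl m)
        · exact absurd (hx m hc) (lt_irrefl m)
      rw [member_succ_not_mem (hnm i (by omega)), member_succ_not_mem (hnm j (by omega))]
      exact hne
    · rcases le_or_gt i W₁.length with hcase3 | hcase4
      · -- cross case
        set j' := j - W₁.length - 1 with hj'
        have hjj : j = W₁.length + 1 + j' := by omega
        refine ⟨Urep (m+1) (k+1), fun c hc => Urep_letters (m+1) (k+1) c hc, ?_⟩
        rw [htk1 i (by omega), hjj, htk2 j']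
        -- left side is False
        have hurep : Urep (m+1) (k+1) = List.range (m+1) ++ Urep (m+1) k := rfl
        have hleft : ¬ member (k+2) (m+1) (W₁.take i ++ Urep (m+1) (k+1)) := by
          have hsplit : W₁.take i ++ Urep (m+1) (k+1)
              = (W₁.take i ++ List.range m) ++ m :: Urep (m+1) k := by
            rw [hurep, List.range_succ, List.append_assoc, List.append_assoc]
            rfl
          have hmem : m ∈ W₁.take i ++ Urep (m+1) (k+1) := by
            rw [hsplit]
            exact List.mem_append.2 (Or.inr (@List.mem_cons_self _ m _))
          rw [member_succ_mem hmem, hsplit, tailAfter_of_not_mem_left (by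
            intro hc
            rcases List.mem_append.1 hc with hc | hc
            · exact absurd (hW₁letters m ((List.take_sublist i W₁).subset hc)) (lt_irrefl m)
            · exact absurd (List.mem_range.1 hc) (lt_irrefl m)) _]
          exact not_member_Urep k (m+1) (by omega)
        have hright : member (k+2) (m+1) ((W₁ ++ m :: W₂.take j') ++ Urep (m+1) (k+1)) := by
          have hsplit : (W₁ ++ m :: W₂.take j') ++ Urep (m+1) (k+1)
              = W₁ ++ m :: (W₂.take j' ++ Urep (m+1) (k+1)) := by
            rw [List.append_assoc]
            rfl
          have hmem : m ∈ (W₁ ++ m :: W₂.take j') ++ Urep (m+1) (k+1) := by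
            rw [hsplit]
            exact List.mem_append.2 (Or.inr (@List.mem_cons_self _ m _))
          rw [member_succ_mem hmem, hsplit, tailAfter_of_not_mem_left hmW₁ _]
          exact member_append_Urep k (m+1) _ (by omega)
        exact fun hiff => hleft (hiff.2 hright)
      · -- both in part 2
        set i' := i - W₁.length - 1 with hi'
        set j' := j - W₁.length - 1 with hj'
        have hii : i = W₁.length + 1 + i' := by omega
        have hjj : j = W₁.length + 1 + j' := by omega
        obtain ⟨x, hx, hne⟩ := dist (k+1) (m+1) (by omega) i' j' (by omega) (by
          rw [← hW₂]; omega)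
        refine ⟨x, hx, ?_⟩
        rw [hii, hjj, htk2 i', htk2 j']
        have red : ∀ t, member (k+2) (m+1) ((W₁ ++ m :: W₂.take t) ++ x)
            ↔ member (k+1) (m+1) (W₂.take t ++ x) := by
          intro t
          have hsplit : (W₁ ++ m :: W₂.take t) ++ x = W₁ ++ m :: (W₂.take t ++ x) := by
            rw [List.append_assoc]
            rfl
          have hmem : m ∈ (W₁ ++ m :: W₂.take t) ++ x := by
            rw [hsplit]
            exact List.mem_append.2 (Or.inr (@List.mem_cons_self _ m _))
          rw [member_succ_mem hmem, hsplit, tailAfter_of_not_mem_left hmW₁ _]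
        rw [red i', red j']
        exact hne
termination_by k m => (k, m)

theorem kEquiv_map {β : Type*} (f : α → β) {k : ℕ} {u v : List α} (h : kEquiv k u v) :
    kEquiv k (u.map f) (v.map f) := by
  have key : ∀ {p q : List α}, subk k p ⊆ subk k q → subk k (p.map f) ⊆ subk k (q.map f) := by
    intro p q hpq w hw
    obtain ⟨h1, h2⟩ := hw
    rw [List.sublist_map_iff] at h2
    obtain ⟨w', hw', rfl⟩ := h2
    have : w' ∈ subk k p := ⟨by simpa using h1, hw'⟩
    have h3 := hpq this
    exact ⟨h1, List.Sublist.map f h3.2⟩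
  exact Set.Subset.antisymm (key (le_of_eq h)) (key (le_of_eq h.symm))

theorem map_val_pmap {n : ℕ} (l : List ℕ) (H : ∀ c ∈ l, c < n) :
    ((l.pmap (fun c hc => (⟨c, hc⟩ : Fin n)) H).map Fin.val) = l := by
  induction l with
  | nil => rfl
  | cons a l ih =>
    simp only [List.pmap, List.map_cons]
    rw [ih]

section Assembly

theorem part_one {k n : ℕ} (α : Type) [Fintype α] (hcard : Fintype.card α = n)
    (L : Language α) (hPT : IsPT k L) :
    ∃ (τ : Type) (_ : Fintype τ) (D : DFA α τ),
      IsMinimalDFA D ∧ D.accepts = L ∧ dfaDepth D ≤ Nat.choose (k + n) k - 1 := by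
  haveI := nerode_finite k L hPT
  exact ⟨Quotient (nerode L), Fintype.ofFinite _, nDFA L, nDFA_minimal L, nDFA_accepts L,
    depth_le_of_minimal hcard hPT _ (nDFA_minimal L) (nDFA_accepts L)⟩

theorem part_two (k n : ℕ) (hk : 1 ≤ k) (hn : 1 ≤ n) :
    ∃ (α : Type) (instα : Fintype α) (L : Language α),
      @Fintype.card α instα = n ∧ IsPT k L ∧
      ∃ (τ : Type) (_ : Fintype τ) (D : DFA α τ),
        IsMinimalDFA D ∧ D.accepts = L ∧ dfaDepth D = Nat.choose (k + n) k - 1 := by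
  classical
  set Lfin : Language (Fin n) := {u | member k n (u.map Fin.val)} with hLfin
  have hPT : IsPT k Lfin := fun u v h => member_invariant k n _ _ (kEquiv_map Fin.val h)
  haveI hfinτ : Finite (Quotient (nerode Lfin)) := nerode_finite k Lfin hPT
  haveI : Fintype (Quotient (nerode Lfin)) := Fintype.ofFinite _
  set N := (W k n).length with hN
  have hNlen : N + 1 = (k + n).choose k := W_length k n hk
  have hWlet : ∀ c ∈ W k n, c < n := W_letters k n
  set Wfin : List (Fin n) := (W k n).pmap (fun c hc => (⟨c, hc⟩ : Fin n)) hWlet with hWfin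
  have hmap : Wfin.map Fin.val = W k n := map_val_pmap _ _
  have hlenW : Wfin.length = N := by
    rw [hWfin, List.length_pmap]
  -- the path
  set qs : Fin (N+1) → Quotient (nerode Lfin) := fun i => ⟦Wfin.take i.val⟧ with hqs
  set as : Fin N → Fin n := fun i => Wfin.get ⟨i.val, by rw [hlenW]; exact i.2⟩ with has
  have hstep : ∀ i : Fin N, (nDFA Lfin).step (qs i.castSucc) (as i) = qs i.succ := by
    intro i
    have h1 : (nDFA Lfin).step ⟦Wfin.take i.val⟧ (as i) = ⟦Wfin.take i.val ++ [as i]⟧ := rfl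
    have h2 : Wfin.take i.val ++ [as i] = Wfin.take (i.val + 1) := by
      rw [has]
      have hlt : i.val < Wfin.length := by rw [hlenW]; exact i.2
      rw [← List.take_concat_get hlt, List.concat_eq_append]
      rfl
    show (nDFA Lfin).step ⟦Wfin.take i.castSucc.val⟧ (as i) = ⟦Wfin.take i.succ.val⟧
    have h3 : i.castSucc.val = i.val := rfl
    have h4 : i.succ.val = i.val + 1 := rfl
    rw [h3, h4, h1, h2]
  have hkey : ∀ i j : Fin (N+1), (i : ℕ) < (j : ℕ) → qs i ≠ qs j := by
    intro i j hij heq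
    obtain ⟨x, hx, hne⟩ := dist k n hk i.val j.val hij (by omega)
    set xfin : List (Fin n) := x.pmap (fun c hc => (⟨c, hc⟩ : Fin n)) hx with hxfin
    have hxmap : xfin.map Fin.val = x := map_val_pmap _ _
    have hnerode := Quotient.exact heq
    have hiff := hnerode xfin
    have hmv : ∀ t : ℕ, ((Wfin.take t ++ xfin).map Fin.val) = (W k n).take t ++ x := by
      intro t
      rw [List.map_append, List.map_take, hmap, hxmap]
    apply hne
    have e1 : member k n ((W k n).take i.val ++ x)
        ↔ (Wfin.take i.val ++ xfin) ∈ Lfin := by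
      rw [hLfin]
      show _ ↔ member k n ((Wfin.take i.val ++ xfin).map Fin.val)
      rw [hmv]
    have e2 : member k n ((W k n).take j.val ++ x)
        ↔ (Wfin.take j.val ++ xfin) ∈ Lfin := by
      rw [hLfin]
      show _ ↔ member k n ((Wfin.take j.val ++ xfin).map Fin.val)
      rw [hmv]
    exact e1.trans (hiff.trans e2.symm)
  have hinj : Function.Injective qs := by
    intro i j heq
    rcases lt_trichotomy (i : ℕ) (j : ℕ) with h | h | h
    · exact absurd heq (hkey i j h)
    · exact Fin.ext h
    · exact absurd heq.symm (hkey j i h)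
  have hpath : DFAHasSimplePath (nDFA Lfin) N := ⟨qs, as, hinj, hstep⟩
  have hbdd : BddAbove {m | DFAHasSimplePath (nDFA Lfin) m} := by
    refine ⟨Fintype.card (Quotient (nerode Lfin)), ?_⟩
    rintro b ⟨qs', as', hinj', hstep'⟩
    have := Fintype.card_le_of_injective qs' hinj'
    rw [Fintype.card_fin] at this
    omega
  have hge : N ≤ dfaDepth (nDFA Lfin) := le_csSup hbdd hpath
  have hle : dfaDepth (nDFA Lfin) ≤ (k + n).choose k - 1 :=
    depth_le_of_minimal (Fintype.card_fin n) hPT _ (nDFA_minimal Lfin) (nDFA_accepts Lfin)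
  refine ⟨Fin n, inferInstance, Lfin, Fintype.card_fin n, hPT,
    Quotient (nerode Lfin), inferInstance, nDFA Lfin, nDFA_minimal Lfin, nDFA_accepts Lfin, ?_⟩
  omega

end Assembly

end PT18

/-- Tight bound on the depth of minimal DFAs of `k`-PT languages over `n`-letter
alphabets: (i) every such language has a minimal DFA of depth at most `C(k+n,k)-1`;
(ii) the bound is attained. -/
theorem stmt18 (k n : ℕ) (hk : 1 ≤ k) (hn : 1 ≤ n) :
    (∀ (α : Type) [Fintype α], Fintype.card α = n → ∀ L : Language α, IsPT k L →
      ∃ (τ : Type) (_ : Fintype τ) (D : DFA α τ),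
        IsMinimalDFA D ∧ D.accepts = L ∧ dfaDepth D ≤ Nat.choose (k + n) k - 1) ∧
    (∃ (α : Type) (instα : Fintype α) (L : Language α),
      @Fintype.card α instα = n ∧ IsPT k L ∧
      ∃ (τ : Type) (_ : Fintype τ) (D : DFA α τ),
        IsMinimalDFA D ∧ D.accepts = L ∧ dfaDepth D = Nat.choose (k + n) k - 1) := by
  constructor
  · intro α _ hcard L hPT
    exact PT18.part_one α hcard L hPT
  · exact PT18.part_two k n hk hn
end
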